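/- arXiv:1703.01855 — 2 statements merged into one kernel-verified Lean document; each statement's English description precedes it below -/
import Mathlib

section
/- Let m > 0, δ > 0, C ≥ 0, and let f : [0,m] × [0,1] → ℂ (viewing the rectangle as a subset of ℂ) be continuous, holomorphic on the interior, with ∫∫ ‖f′‖² dA ≤ C over the rectangle. Suppose A and B are sets in ℂ with f([0,m] × {0}) ⊆ A, f([0,m] × {1}) ⊆ B, and the distance between A and B is at least δ. Then m ≤ C/δ². -/
open MeasureTheory Complex

/-- Cauchy–Schwarz / Jensen: on a probability measure, `(∫ u)² ≤ ∫ u²`. -/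
lemma sq_integral_le_of_prob {α : Type*} [MeasurableSpace α] (μ : Measure α)
    [IsProbabilityMeasure μ] {u : α → ℝ} (hu : Integrable u μ)
    (hu2 : Integrable (fun a => u a ^ 2) μ) :
    (∫ a, u a ∂μ) ^ 2 ≤ ∫ a, u a ^ 2 ∂μ := by
  set c := ∫ a, u a ∂μ with hc
  have h0 : 0 ≤ ∫ a, (u a - c) ^ 2 ∂μ := integral_nonneg fun a => sq_nonneg _
  have hexp : ∫ a, (u a - c) ^ 2 ∂μ
      = (∫ a, u a ^ 2 ∂μ) - 2 * c * c + c ^ 2 := by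
    have heq : (fun a => (u a - c) ^ 2)
        = fun a => (u a ^ 2 - (2 * c) * u a) + c ^ 2 := by
      funext a; ring
    have hi1 : Integrable (fun a => u a ^ 2 - 2 * c * u a) μ := by
      have := hu2.sub (hu.const_mul (2 * c))
      exact this
    have hi2 : Integrable (fun a => 2 * c * u a) μ := hu.const_mul (2 * c)
    rw [heq, integral_add hi1 (integrable_const _), integral_sub hu2 hi2,
      integral_const_mul, integral_const]
    simp [← hc, measure_univ, mul_assoc]
  nlinarith [h0, hexp]

/-- Modulus bound: if `f` is continuous on the closed rectangle `[0,m] × [0,1]`,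
holomorphic on its interior, with area (with multiplicity) of its image bounded
by `C`, and the two horizontal sides are sent into sets `A` and `B` at distance
at least `δ` from each other, then `m ≤ C / δ²`. -/
theorem modulus_bound_of_separated_sides {m δ C : ℝ} (hm : 0 < m) (hδ : 0 < δ)
    (hC : 0 ≤ C) (f : ℂ → ℂ) (A B : Set ℂ)
    (hcont : ContinuousOn f (Set.Icc 0 m ×ℂ Set.Icc 0 1))
    (hdiff : DifferentiableOn ℂ f (Set.Ioo 0 m ×ℂ Set.Ioo 0 1))
    (hint : IntegrableOn (fun z => ‖deriv f z‖ ^ 2) (Set.Icc 0 m ×ℂ Set.Icc 0 1))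
    (harea : ∫ z in Set.Icc 0 m ×ℂ Set.Icc 0 1, ‖deriv f z‖ ^ 2 ≤ C)
    (hA : ∀ x ∈ Set.Icc (0:ℝ) m, f (x : ℂ) ∈ A)
    (hB : ∀ x ∈ Set.Icc (0:ℝ) m, f (x + Complex.I) ∈ B)
    (hdist : ∀ a ∈ A, ∀ b ∈ B, δ ≤ dist a b) :
    m ≤ C / δ ^ 2 := by
  set s : Set ℝ := Set.Icc 0 m with hs
  set t : Set ℝ := Set.Icc (0:ℝ) 1 with ht
  set g : ℂ → ℝ := fun z => ‖deriv f z‖ ^ 2 with hg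
  set F : ℝ × ℝ → ℝ := fun p => ‖deriv f (p.1 + p.2 * I)‖ ^ 2 with hField
  have hemb : MeasurableEmbedding (Complex.measurableEquivRealProd.symm) :=
    MeasurableEquiv.measurableEmbedding _
  have hmp : MeasurePreserving (Complex.measurableEquivRealProd.symm) :=
    Complex.volume_preserving_equiv_real_prod.symm _
  have hpre : Complex.measurableEquivRealProd.symm ⁻¹' (s ×ℂ t) = s ×ˢ t := by
    ext p
    simp [Complex.mem_reProdIm, Set.mem_prod]
  have hFe : ∀ p : ℝ × ℝ, F p = g (Complex.measurableEquivRealProd.symm p) := by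
    intro p
    simp [F, g, Complex.measurableEquivRealProd_symm_apply, Complex.mk_eq_add_mul_I]
  have hGint : IntegrableOn F (s ×ˢ t) := by
    have h1 := (hmp.integrableOn_comp_preimage hemb).mpr hint
    rw [hpre] at h1
    exact h1.congr_fun (fun p _ => (hFe p).symm)
      (measurableSet_Icc.prod measurableSet_Icc)
  have hGeq : ∫ p in s ×ˢ t, F p = ∫ z in s ×ℂ t, g z := by
    have h1 := hmp.setIntegral_preimage_emb hemb g (s ×ℂ t)
    rw [hpre] at h1
    rw [← h1]
    exact setIntegral_congr_fun (measurableSet_Icc.prod measurableSet_Icc)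
      (fun p _ => hFe p)
  set μs : Measure ℝ := volume.restrict s with hμs
  set μt : Measure ℝ := volume.restrict t with hμt
  have hvol : μs.prod μt = (volume : Measure (ℝ × ℝ)).restrict (s ×ˢ t) := by
    rw [hμs, hμt, Measure.prod_restrict, ← Measure.volume_eq_prod]
  have hF : Integrable F (μs.prod μt) := by rw [hvol]; exact hGint
  haveI : IsProbabilityMeasure μt :=
    ⟨by simp [hμt, ht, Real.volume_Icc]⟩
  haveI : IsFiniteMeasure μs :=
    ⟨by simp [hμs, hs, Real.volume_Icc]⟩
  have hslice : ∀ᵐ x ∂μs, Integrable (fun y => F (x, y)) μt := hF.prod_right_ae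
  have hae : ∀ᵐ x ∂μs, x ∈ Set.Ioo 0 m := by
    have h0 : (volume : Measure ℝ) ({0, m} : Set ℝ) = 0 := (Set.toFinite _).measure_zero _
    rw [hμs, ae_restrict_iff' measurableSet_Icc]
    have hne : ∀ᵐ x : ℝ ∂volume, x ∉ ({0, m} : Set ℝ) :=
      measure_eq_zero_iff_ae_notMem.mp h0
    filter_upwards [hne] with x hx hxs
    simp only [Set.mem_insert_iff, Set.mem_singleton_iff, not_or] at hx
    exact ⟨lt_of_le_of_ne hxs.1 (Ne.symm hx.1), lt_of_le_of_ne hxs.2 hx.2⟩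
  have key : ∀ᵐ x ∂μs, δ ^ 2 ≤ ∫ y, F (x, y) ∂μt := by
    filter_upwards [hslice, hae] with x hxint hx
    set u : ℝ → ℝ := fun y => ‖deriv f ((x:ℂ) + y * I)‖ with hu
    have hFx : ∀ y : ℝ, F (x, y) = u y ^ 2 := fun y => rfl
    have hu2 : Integrable (fun y => u y ^ 2) μt := by
      refine hxint.congr (Filter.Eventually.of_forall fun y => (hFx y))
    have hline : Continuous fun y : ℝ => (x:ℂ) + y * I :=
      continuous_const.add (Complex.continuous_ofReal.mul continuous_const)
    have hdm : Measurable fun y : ℝ => deriv f ((x:ℂ) + y * I) :=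
      (measurable_deriv f).comp hline.measurable
    have hu_meas : AEStronglyMeasurable u μt := hdm.norm.aestronglyMeasurable
    have hbound : ∀ y : ℝ, u y ≤ 1 + u y ^ 2 := by
      intro y; nlinarith [norm_nonneg (deriv f ((x:ℂ) + y * I))]
    have hu_int : Integrable u μt := by
      refine Integrable.mono' ((integrable_const 1).add hu2) hu_meas ?_
      filter_upwards with y
      rw [Real.norm_of_nonneg (norm_nonneg _)]
      exact hbound y
    -- FTC along the vertical segment
    have hseg : ∀ y ∈ Set.Icc (0:ℝ) 1, (x:ℂ) + y * I ∈ Set.Icc 0 m ×ℂ Set.Icc 0 1 := by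
      intro y hy
      rw [Complex.mem_reProdIm]
      constructor
      · simpa using ⟨hx.1.le, hx.2.le⟩
      · simpa using ⟨hy.1, hy.2⟩
    have hφcont : ContinuousOn (fun y : ℝ => f ((x:ℂ) + y * I)) (Set.Icc 0 1) :=
      hcont.comp hline.continuousOn (fun y hy => hseg y hy)
    have hop : IsOpen (Set.Ioo 0 m ×ℂ Set.Ioo (0:ℝ) 1) :=
      isOpen_Ioo.reProdIm isOpen_Ioo
    have hφderiv : ∀ y ∈ Set.Ioo (0:ℝ) 1,
        HasDerivAt (fun y : ℝ => f ((x:ℂ) + y * I)) (deriv f ((x:ℂ) + y * I) * I) y := by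
      intro y hy
      have hz : (x:ℂ) + y * I ∈ Set.Ioo 0 m ×ℂ Set.Ioo (0:ℝ) 1 := by
        rw [Complex.mem_reProdIm]
        constructor
        · simpa using ⟨hx.1, hx.2⟩
        · simpa using ⟨hy.1, hy.2⟩
      have hdf : DifferentiableAt ℂ f ((x:ℂ) + y * I) :=
        hdiff.differentiableAt (hop.mem_nhds hz)
      have hψ : HasDerivAt (fun y : ℝ => (x:ℂ) + y * I) I y := by
        simpa using ((Complex.ofRealCLM.hasDerivAt.mul_const I).const_add (x:ℂ))
      have h2 : HasDerivAt (f ∘ fun y : ℝ => (x:ℂ) + y * I)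
          (I • deriv f ((x:ℂ) + y * I)) y :=
        (hdf.hasDerivAt).scomp y hψ
      simpa [Function.comp_def, smul_eq_mul, mul_comm] using h2
    have hu2Ioc : Integrable (fun y => 1 + u y ^ 2) (volume.restrict (Set.Ioc (0:ℝ) 1)) := by
      refine ((integrable_const 1).add hu2).mono_measure ?_
      exact Measure.restrict_mono Set.Ioc_subset_Icc_self le_rfl
    have hcs : IntervalIntegrable (fun y => deriv f ((x:ℂ) + y * I) * I) volume 0 1 := by
      rw [intervalIntegrable_iff_integrableOn_Ioc_of_le zero_le_one]
      refine Integrable.mono' hu2Ioc (hdm.mul_const I).aestronglyMeasurable ?_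
      filter_upwards with y
      rw [norm_mul, Complex.norm_I, mul_one]
      exact hbound y
    have hFTC : ∫ y in (0:ℝ)..1, deriv f ((x:ℂ) + y * I) * I
        = f ((x:ℂ) + (1:ℝ) * I) - f ((x:ℂ) + (0:ℝ) * I) :=
      intervalIntegral.integral_eq_sub_of_hasDerivAt_of_le zero_le_one hφcont hφderiv hcs
    have hxmem : x ∈ Set.Icc (0:ℝ) m := ⟨hx.1.le, hx.2.le⟩
    have h1 : δ ≤ ‖f ((x:ℂ) + I) - f (x:ℂ)‖ := by
      have := hdist _ (hA x hxmem) _ (hB x hxmem)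
      rwa [dist_eq_norm, norm_sub_rev] at this
    have hδle : δ ≤ ∫ y in (0:ℝ)..1, u y := by
      calc δ ≤ ‖f ((x:ℂ) + I) - f (x:ℂ)‖ := h1
        _ = ‖∫ y in (0:ℝ)..1, deriv f ((x:ℂ) + y * I) * I‖ := by
            rw [hFTC]; norm_num
        _ ≤ ∫ y in (0:ℝ)..1, ‖deriv f ((x:ℂ) + y * I) * I‖ :=
            intervalIntegral.norm_integral_le_integral_norm zero_le_one
        _ = ∫ y in (0:ℝ)..1, u y := by
            simp [hu, norm_mul, Complex.norm_I]
    have hIoc : ∫ y in (0:ℝ)..1, u y = ∫ y, u y ∂μt := by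
      rw [intervalIntegral.integral_of_le zero_le_one, hμt, ht,
        ← integral_Icc_eq_integral_Ioc]
    have hδ2 : δ ≤ ∫ y, u y ∂μt := hIoc ▸ hδle
    have hCS : (∫ y, u y ∂μt) ^ 2 ≤ ∫ y, u y ^ 2 ∂μt :=
      sq_integral_le_of_prob μt hu_int hu2
    have hfinal : δ ^ 2 ≤ ∫ y, u y ^ 2 ∂μt := by nlinarith
    calc δ ^ 2 ≤ ∫ y, u y ^ 2 ∂μt := hfinal
      _ = ∫ y, F (x, y) ∂μt := by
          exact integral_congr_ae (Filter.Eventually.of_forall fun y => (hFx y).symm)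
  have hconst : ∫ _x, (δ ^ 2 : ℝ) ∂μs = m * δ ^ 2 := by
    rw [integral_const]
    simp [hμs, hs, Real.volume_Icc, hm.le, ENNReal.toReal_ofReal, smul_eq_mul]
  have hmono : ∫ x, (δ ^ 2 : ℝ) ∂μs ≤ ∫ x, (∫ y, F (x, y) ∂μt) ∂μs :=
    integral_mono_ae (integrable_const _) hF.integral_prod_left key
  have hmain : m * δ ^ 2 ≤ C := by
    calc m * δ ^ 2 = ∫ _x, (δ ^ 2 : ℝ) ∂μs := hconst.symm
      _ ≤ ∫ x, (∫ y, F (x, y) ∂μt) ∂μs := hmono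
      _ = ∫ p, F p ∂(μs.prod μt) := (integral_prod F hF).symm
      _ = ∫ p in s ×ˢ t, F p := by rw [hvol]
      _ = ∫ z in s ×ℂ t, g z := hGeq
      _ ≤ C := harea
  rw [le_div_iff₀ (by positivity)]
  linarith
end

section
/- Let 0 < ρ < ρ′, C ≥ 0, b ∈ ℂ, and let f be holomorphic on a neighborhood of the quarter annulus Q = {b + r·e^{iθ} : ρ ≤ r ≤ ρ′, π/2 ≤ θ ≤ π} with ∫∫_Q ‖f′(z)‖² dA(z) ≤ C. Then there exists r ∈ [ρ, ρ′] such that the length of the image of the quarter circle of radius r satisfies ∫_{π/2}^{π} ‖f′(b + r·e^{iθ})‖ · r dθ ≤ √(π·C / (2·log(ρ′/ρ))). -/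
open MeasureTheory Complex
open scoped ENNReal Real

/-- Auxiliary pointwise identity relating the translated complex polar
coordinate map to the explicit exponential form. -/
lemma polar_symm_eq (b : ℂ) (p : ℝ × ℝ) :
    b + Complex.polarCoord.symm p =
      Complex.measurableEquivRealProd.symm
        (Complex.measurableEquivRealProd b + polarCoord.symm p) := by
  simp only [Complex.polarCoord_symm_apply, polarCoord_symm_apply,
    Complex.measurableEquivRealProd, Homeomorph.toMeasurableEquiv_symm_coe,
    Homeomorph.toMeasurableEquiv_coe]
  apply Complex.ext <;> simp [Complex.equivRealProdCLM_symm_apply]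

/-- Change of variables to polar coordinates (translated by `b`) for lower
Lebesgue integrals, on a subset of the polar coordinate target. -/
lemma lintegral_comp_polar (b : ℂ) (S' : Set (ℝ × ℝ)) (hS'm : MeasurableSet S')
    (hS' : S' ⊆ polarCoord.target) (h : ℂ → ℝ≥0∞) :
    ∫⁻ z in (fun p : ℝ × ℝ => b + Complex.polarCoord.symm p) '' S', h z
      = ∫⁻ p in S', ENNReal.ofReal p.1 * h (b + Complex.polarCoord.symm p) := by
  set e := Complex.measurableEquivRealProd with he
  set F : ℝ × ℝ → ℝ × ℝ := fun p => e b + polarCoord.symm p with hF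
  set B : ℝ × ℝ → ℝ × ℝ →L[ℝ] ℝ × ℝ := fun p =>
    LinearMap.toContinuousLinearMap (Matrix.toLin (Module.Basis.finTwoProd ℝ) (Module.Basis.finTwoProd ℝ)
      !![Real.cos p.2, -p.1 * Real.sin p.2; Real.sin p.2, p.1 * Real.cos p.2]) with hB
  have B_det : ∀ p, (B p).det = p.1 := by
    intro p
    conv_rhs => rw [← one_mul p.1, ← Real.cos_sq_add_sin_sq p.2]
    simp only [hB, neg_mul, LinearMap.det_toContinuousLinearMap, LinearMap.det_toLin,
      Matrix.det_fin_two_of, sub_neg_eq_add]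
    ring
  have himg : (fun p : ℝ × ℝ => b + Complex.polarCoord.symm p) '' S' = e.symm '' (F '' S') := by
    rw [Set.image_image]
    exact Set.image_congr fun p _ => polar_symm_eq b p
  rw [himg, ← (Complex.volume_preserving_equiv_real_prod.symm).setLIntegral_comp_emb
    e.symm.measurableEmbedding h (F '' S')]
  have hder : ∀ p ∈ S', HasFDerivWithinAt F (B p) S' p := fun p _ =>
    ((hasFDerivAt_polarCoord_symm p).const_add (e b)).hasFDerivWithinAt
  have hinj : Set.InjOn F S' := by
    have hio := polarCoord.symm.injOn
    rw [polarCoord.symm_source] at hio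
    exact fun p hp q hq hpq => hio (hS' hp) (hS' hq) (by simpa [hF] using hpq)
  rw [lintegral_image_eq_lintegral_abs_det_fderiv_mul volume hS'm hder hinj]
  refine setLIntegral_congr_fun hS'm (fun p hp => ?_)
  rw [B_det, abs_of_pos (hS' hp).1, ← polar_symm_eq b p]

/-- Explicit exponential form of `Complex.polarCoord.symm`. -/
lemma polar_symm_exp (r θ : ℝ) :
    Complex.polarCoord.symm (r, θ) = (r : ℂ) * Complex.exp (θ * Complex.I) := by
  simp [Complex.polarCoord_symm_apply, Complex.exp_mul_I]

/-- Cauchy–Schwarz for lower Lebesgue integrals. -/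
lemma lintegral_sq_le_measure_mul {α : Type*} [MeasurableSpace α] (μ : Measure α)
    {F : α → ℝ≥0∞} (hF : AEMeasurable F μ) :
    (∫⁻ a, F a ∂μ) ^ 2 ≤ (∫⁻ a, F a ^ 2 ∂μ) * μ Set.univ := by
  have hpq : Real.HolderConjugate 2 2 := Real.HolderConjugate.two_two
  have h := ENNReal.lintegral_mul_le_Lp_mul_Lq μ hpq hF
    (aemeasurable_const (b := (1 : ℝ≥0∞)))
  simp only [Pi.mul_apply, mul_one, ENNReal.one_rpow, lintegral_const, one_mul] at h
  have hsq : ∀ x : ℝ≥0∞, x ^ ((1:ℝ)/2) * x ^ ((1:ℝ)/2) = x := fun x => by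
    rw [← pow_two, ← ENNReal.rpow_natCast (x ^ ((1:ℝ)/2)) 2, ← ENNReal.rpow_mul]
    norm_num
  have h2 : (∫⁻ a, F a ∂μ) ^ 2 ≤
      ((∫⁻ a, F a ^ (2:ℝ) ∂μ) ^ ((1:ℝ)/2) * (μ Set.univ) ^ ((1:ℝ)/2)) ^ 2 := by
    rw [pow_two, pow_two]; exact mul_le_mul' h h
  refine h2.trans_eq ?_
  rw [pow_two]
  calc ((∫⁻ a, F a ^ (2:ℝ) ∂μ) ^ ((1:ℝ)/2) * (μ Set.univ) ^ ((1:ℝ)/2)) *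
        ((∫⁻ a, F a ^ (2:ℝ) ∂μ) ^ ((1:ℝ)/2) * (μ Set.univ) ^ ((1:ℝ)/2))
      = ((∫⁻ a, F a ^ (2:ℝ) ∂μ) ^ ((1:ℝ)/2) * (∫⁻ a, F a ^ (2:ℝ) ∂μ) ^ ((1:ℝ)/2)) *
        ((μ Set.univ) ^ ((1:ℝ)/2) * (μ Set.univ) ^ ((1:ℝ)/2)) := by ring
    _ = (∫⁻ a, F a ^ (2:ℝ) ∂μ) * μ Set.univ := by rw [hsq, hsq]
    _ = (∫⁻ a, F a ^ 2 ∂μ) * μ Set.univ := by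
        congr 1; refine lintegral_congr fun a => ?_; rw [ENNReal.rpow_two]


/-- Length–area argument on a quarter annulus: if `f` is holomorphic on a
neighborhood of the quarter annulus `Q` centered at `b` with radii `ρ ≤ r ≤ ρ'`
and angles `π/2 ≤ θ ≤ π`, and the area with multiplicity of its image is at
most `C`, then some quarter circle of radius `r ∈ [ρ, ρ']` has image of length
at most `√(π C / (2 log(ρ'/ρ)))`. -/
theorem exists_short_quarter_circle {ρ ρ' C : ℝ} (hρ : 0 < ρ) (hρρ' : ρ < ρ')
    (hC : 0 ≤ C) (b : ℂ) (f : ℂ → ℂ) (U : Set ℂ)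
    (Q : Set ℂ)
    (hQ : Q = {z : ℂ | ∃ r ∈ Set.Icc ρ ρ', ∃ θ ∈ Set.Icc (Real.pi / 2) Real.pi,
      z = b + r * Complex.exp (θ * Complex.I)})
    (hU : IsOpen U) (hQU : Q ⊆ U)
    (hf : DifferentiableOn ℂ f U)
    (hint : IntegrableOn (fun z => ‖deriv f z‖ ^ 2) Q)
    (harea : ∫ z in Q, ‖deriv f z‖ ^ 2 ≤ C) :
    ∃ r ∈ Set.Icc ρ ρ',
      ∫ θ in (Real.pi / 2)..Real.pi,
          ‖deriv f (b + r * Complex.exp (θ * Complex.I))‖ * r ≤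
        Real.sqrt (Real.pi * C / (2 * Real.log (ρ' / ρ))) := by
  by_contra hcon
  push_neg at hcon
  have hπ : (0:ℝ) < Real.pi := Real.pi_pos
  have hρ'pos : (0:ℝ) < ρ' := hρ.trans hρρ'
  have hlog : 0 < Real.log (ρ' / ρ) := Real.log_pos ((one_lt_div hρ).2 hρρ')
  set L : ℝ := Real.sqrt (Real.pi * C / (2 * Real.log (ρ' / ρ))) with hLdef
  have hL0 : 0 ≤ L := Real.sqrt_nonneg _
  have hLsq : L ^ 2 = Real.pi * C / (2 * Real.log (ρ' / ρ)) :=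
    Real.sq_sqrt (by positivity)
  -- the polar rectangle
  set S' : Set (ℝ × ℝ) := Set.Icc ρ ρ' ×ˢ Set.Ico (Real.pi/2) Real.pi with hS'def
  have hS'm : MeasurableSet S' := measurableSet_Icc.prod measurableSet_Ico
  have hS'sub : S' ⊆ polarCoord.target := by
    rintro ⟨r, θ⟩ ⟨hr, hθ⟩
    refine ⟨hρ.trans_le hr.1, ?_, hθ.2⟩
    have := hθ.1
    simp only [Set.mem_Icc] at hr
    linarith
  set G : ℝ × ℝ → ℂ := fun p => b + (p.1 : ℂ) * Complex.exp ((p.2 : ℂ) * Complex.I) with hGdef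
  have hGpolar : ∀ p : ℝ × ℝ, G p = b + Complex.polarCoord.symm p := by
    rintro ⟨r, θ⟩
    rw [polar_symm_exp]
  have hGcont : Continuous G :=
    continuous_const.add ((Complex.continuous_ofReal.comp continuous_fst).mul
      (Complex.continuous_exp.comp
        ((Complex.continuous_ofReal.comp continuous_snd).mul continuous_const)))
  have hdc : ContinuousOn (fun z => ‖deriv f z‖) U :=
    ((hf.analyticOnNhd hU).deriv.continuousOn).norm
  have hImQ : G '' S' ⊆ Q := by
    rintro z ⟨⟨r, θ⟩, ⟨hr, hθ⟩, rfl⟩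
    rw [hQ]
    exact ⟨r, hr, θ, ⟨hθ.1, hθ.2.le⟩, rfl⟩
  -- the part of Q not covered by the polar image is null
  have hspan : (Submodule.span ℝ {(1:ℂ)} : Submodule ℝ ℂ) ≠ ⊤ := by
    intro h
    have hI : Complex.I ∈ (Submodule.span ℝ {(1:ℂ)} : Submodule ℝ ℂ) := by
      rw [h]; trivial
    rw [Submodule.mem_span_singleton] at hI
    obtain ⟨a, ha⟩ := hI
    rw [Complex.real_smul, mul_one] at ha
    simpa using congrArg Complex.im ha
  have hnull : volume (Q \ G '' S') = 0 := by
    have hsubset : Q \ G '' S' ⊆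
        (fun w => b + w) '' ((Submodule.span ℝ {(1:ℂ)} : Submodule ℝ ℂ) : Set ℂ) := by
      rintro z ⟨hzQ, hznot⟩
      rw [hQ] at hzQ
      obtain ⟨r, hr, θ, hθ, rfl⟩ := hzQ
      rcases lt_or_eq_of_le hθ.2 with hlt | heq
      · exact absurd ⟨(r, θ), ⟨hr, hθ.1, hlt⟩, rfl⟩ hznot
      · refine ⟨(r : ℂ) * Complex.exp ((θ:ℂ) * Complex.I), ?_, rfl⟩
        rw [heq, Complex.exp_pi_mul_I]
        exact Submodule.mem_span_singleton.2
          ⟨-r, by rw [Complex.real_smul, mul_one]; push_cast; ring⟩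
    refine le_antisymm ((measure_mono hsubset).trans_eq ?_) zero_le
    have himg : (fun w => b + w) ''
        ((Submodule.span ℝ {(1:ℂ)} : Submodule ℝ ℂ) : Set ℂ)
        = (fun w => -b + w) ⁻¹' ((Submodule.span ℝ {(1:ℂ)} : Submodule ℝ ℂ) : Set ℂ) := by
      ext w
      simp only [Set.mem_image, Set.mem_preimage]
      constructor
      · rintro ⟨v, hv, rfl⟩; simpa using hv
      · intro hv; exact ⟨-b + w, hv, by ring⟩
    rw [himg, measure_preimage_add]
    exact Measure.addHaar_submodule volume _ hspan
  have hQae : Q =ᵐ[volume] G '' S' := by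
    rw [MeasureTheory.ae_eq_set]
    exact ⟨hnull, by rw [Set.diff_eq_empty.2 hImQ]; exact measure_empty⟩
  -- area bound in polar coordinates
  set Φ : ℝ × ℝ → ℝ≥0∞ :=
    fun p => ENNReal.ofReal p.1 * ENNReal.ofReal (‖deriv f (G p)‖ ^ 2) with hΦdef
  have hA : ∫⁻ p in S', Φ p ≤ ENNReal.ofReal C := by
    have h1 : ∫⁻ z in Q, ENNReal.ofReal (‖deriv f z‖ ^ 2) = ∫⁻ p in S', Φ p := by
      rw [setLIntegral_congr hQae]
      have himg2 : G '' S' = (fun p : ℝ×ℝ => b + Complex.polarCoord.symm p) '' S' :=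
        Set.image_congr fun p _ => hGpolar p
      rw [himg2, lintegral_comp_polar b S' hS'm hS'sub]
      refine lintegral_congr fun p => ?_
      rw [← hGpolar p]
    rw [← h1, ← ofReal_integral_eq_lintegral_ofReal hint
      (Filter.Eventually.of_forall fun z => by positivity)]
    exact ENNReal.ofReal_le_ofReal harea
  -- Tonelli
  set μρ := volume.restrict (Set.Icc ρ ρ') with hμρdef
  set μθ := volume.restrict (Set.Ico (Real.pi/2) Real.pi) with hμθdef
  have hres : μρ.prod μθ = (volume : Measure (ℝ×ℝ)).restrict S' := by
    rw [hμρdef, hμθdef, Measure.prod_restrict, ← Measure.volume_eq_prod, hS'def]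
  have hψc : ContinuousOn (fun p : ℝ×ℝ => ‖deriv f (G p)‖) S' :=
    hdc.comp hGcont.continuousOn (fun p hp => hQU (hImQ ⟨p, hp, rfl⟩))
  have hψm : AEMeasurable (fun p : ℝ×ℝ => ‖deriv f (G p)‖) (volume.restrict S') :=
    hψc.aemeasurable hS'm
  have hΦm : AEMeasurable Φ (μρ.prod μθ) := by
    rw [hres]
    exact (measurable_fst.ennreal_ofReal.aemeasurable).mul
      (ENNReal.measurable_ofReal.comp_aemeasurable (hψm.pow_const 2))
  set Inner : ℝ → ℝ≥0∞ := fun r => ∫⁻ θ, Φ (r, θ) ∂μθ with hInnerdef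
  have hTon : ∫⁻ p in S', Φ p = ∫⁻ r, Inner r ∂μρ := by
    rw [← hres]
    exact lintegral_prod Φ hΦm
  have hInnerBound : ∫⁻ r, Inner r ∂μρ ≤ ENNReal.ofReal C := hTon ▸ hA
  -- pointwise lower bound on the inner integral from the contradiction hypothesis
  have hstep : ∀ r ∈ Set.Icc ρ ρ',
      ENNReal.ofReal (C / Real.log (ρ'/ρ) * r⁻¹) < Inner r := by
    intro r hr
    have hr0 : 0 < r := hρ.trans_le hr.1
    set v : ℝ → ℝ := fun θ => ‖deriv f (G (r, θ))‖ with hvdef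
    have hGr : Continuous (fun θ : ℝ => G (r, θ)) :=
      hGcont.comp (continuous_const.prodMk continuous_id)
    have humaps : Set.MapsTo (fun θ => G (r,θ)) (Set.Icc (Real.pi/2) Real.pi) U :=
      fun θ hθ => hQU (by rw [hQ]; exact ⟨r, hr, θ, hθ, rfl⟩)
    have hu : ContinuousOn v (Set.Icc (Real.pi/2) Real.pi) :=
      hdc.comp hGr.continuousOn humaps
    have hcon' : L < ∫ θ in (Real.pi/2)..Real.pi, v θ * r := hcon r hr
    have hle : Real.pi/2 ≤ Real.pi := by linarith
    have hIcc_int : IntegrableOn (fun θ => v θ * r) (Set.Icc (Real.pi/2) Real.pi) :=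
      (hu.mul continuousOn_const).integrableOn_Icc
    have hIco_int : IntegrableOn (fun θ => v θ * r) (Set.Ico (Real.pi/2) Real.pi) :=
      hIcc_int.mono_set Set.Ico_subset_Icc_self
    have hval : ∫ θ in (Real.pi/2)..Real.pi, v θ * r
        = ∫ θ in Set.Ico (Real.pi/2) Real.pi, v θ * r := by
      rw [intervalIntegral.integral_of_le hle, setIntegral_congr_set Ioc_ae_eq_Icc,
        ← setIntegral_congr_set Ico_ae_eq_Icc]
    set l : ℝ≥0∞ := ∫⁻ θ, ENNReal.ofReal (v θ * r) ∂μθ with hldef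
    have hofReal : ENNReal.ofReal (∫ θ in Set.Ico (Real.pi/2) Real.pi, v θ * r) = l :=
      ofReal_integral_eq_lintegral_ofReal hIco_int
        (Filter.Eventually.of_forall fun θ => by positivity)
    have hLl : ENNReal.ofReal L < l := by
      rw [← hofReal]
      exact (ENNReal.ofReal_lt_ofReal_iff
        (hL0.trans_lt (hval ▸ hcon'))).2 (hval ▸ hcon')
    have hFm : AEMeasurable (fun θ => ENNReal.ofReal (v θ * r)) μθ :=
      ENNReal.measurable_ofReal.comp_aemeasurable
        (((hu.mono Set.Ico_subset_Icc_self).mul continuousOn_const).aemeasurable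
          measurableSet_Ico)
    have hCS := lintegral_sq_le_measure_mul μθ hFm
    have hμθuniv : μθ Set.univ = ENNReal.ofReal (Real.pi/2) := by
      rw [hμθdef, Measure.restrict_apply MeasurableSet.univ, Set.univ_inter, Real.volume_Ico]
      congr 1
      ring
    have hptsq : ∀ θ : ℝ, (ENNReal.ofReal (v θ * r)) ^ 2 = ENNReal.ofReal r * Φ (r, θ) := by
      intro θ
      show (ENNReal.ofReal (v θ * r)) ^ 2
          = ENNReal.ofReal r * (ENNReal.ofReal r * ENNReal.ofReal (v θ ^ 2))
      rw [← ENNReal.ofReal_pow (by positivity), ← ENNReal.ofReal_mul hr0.le,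
        ← ENNReal.ofReal_mul hr0.le]
      congr 1
      ring
    have hl2 : l ^ 2 ≤ (ENNReal.ofReal r * Inner r) * ENNReal.ofReal (Real.pi/2) := by
      refine hCS.trans_eq ?_
      rw [hμθuniv]
      congr 1
      rw [hInnerdef, ← lintegral_const_mul' _ _ ENNReal.ofReal_ne_top]
      exact lintegral_congr fun θ => hptsq θ
    have hL2lt : ENNReal.ofReal (L^2) < (ENNReal.ofReal r * Inner r) * ENNReal.ofReal (Real.pi/2) := by
      refine lt_of_lt_of_le ?_ hl2
      rw [ENNReal.ofReal_pow hL0]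
      exact ENNReal.pow_lt_pow_left two_ne_zero hLl
    set k : ℝ≥0∞ := ENNReal.ofReal r * ENNReal.ofReal (Real.pi/2) with hkdef
    have hk0 : k ≠ 0 := by
      rw [hkdef]
      simp only [ne_eq, mul_eq_zero, ENNReal.ofReal_eq_zero, not_or, not_le]
      exact ⟨hr0, by linarith⟩
    have hktop : k ≠ ∞ := by
      rw [hkdef]
      exact ENNReal.mul_ne_top ENNReal.ofReal_ne_top ENNReal.ofReal_ne_top
    have heqk : ENNReal.ofReal (C / Real.log (ρ'/ρ) * r⁻¹) * k = ENNReal.ofReal (L^2) := by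
      rw [hkdef, ← mul_assoc, ← ENNReal.ofReal_mul (by positivity), ← ENNReal.ofReal_mul (by positivity)]
      congr 1
      rw [hLsq]
      field_simp
    have hfin : ENNReal.ofReal (C / Real.log (ρ'/ρ) * r⁻¹) * k < Inner r * k := by
      rw [heqk]
      refine hL2lt.trans_eq ?_
      rw [hkdef]
      ring
    exact (ENNReal.mul_left_strictMono hk0 hktop).lt_iff_lt.1 hfin
  -- the comparison integral evaluates exactly to C
  have hψint : ∫⁻ r, ENNReal.ofReal (C / Real.log (ρ'/ρ) * r⁻¹) ∂μρ = ENNReal.ofReal C := by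
    have hco : ContinuousOn (fun r : ℝ => C / Real.log (ρ'/ρ) * r⁻¹) (Set.Icc ρ ρ') :=
      continuousOn_const.mul (continuousOn_id.inv₀ fun r hr => (hρ.trans_le hr.1).ne')
    have hint2 : IntegrableOn (fun r : ℝ => C / Real.log (ρ'/ρ) * r⁻¹) (Set.Icc ρ ρ') :=
      hco.integrableOn_Icc
    have hnn : 0 ≤ᵐ[volume.restrict (Set.Icc ρ ρ')]
        fun r : ℝ => C / Real.log (ρ'/ρ) * r⁻¹ :=
      (ae_restrict_iff' measurableSet_Icc).2 (Filter.Eventually.of_forall fun r hr => by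
        have h1 : 0 < r := hρ.trans_le hr.1
        positivity)
    rw [hμρdef, ← ofReal_integral_eq_lintegral_ofReal hint2 hnn]
    congr 1
    rw [MeasureTheory.integral_Icc_eq_integral_Ioc, ← intervalIntegral.integral_of_le hρρ'.le,
      intervalIntegral.integral_const_mul, integral_inv
        (Set.notMem_uIcc_of_lt hρ hρ'pos)]
    exact div_mul_cancel₀ C hlog.ne'
  -- measurability of the inner integral
  have hInnerm : AEMeasurable Inner μρ := by
    refine ⟨fun r => ∫⁻ θ, hΦm.mk Φ (r, θ) ∂μθ,
      hΦm.measurable_mk.lintegral_prod_right', ?_⟩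
    filter_upwards [Measure.ae_ae_of_ae_prod hΦm.ae_eq_mk] with r hrr
    exact lintegral_congr_ae hrr
  have hμρ0 : μρ ≠ 0 := by
    rw [hμρdef]
    intro h
    rw [Measure.restrict_eq_zero, Real.volume_Icc, ENNReal.ofReal_eq_zero] at h
    linarith
  have hlt := lintegral_strict_mono hμρ0 hInnerm
    (by rw [hψint]; exact ENNReal.ofReal_ne_top)
    ((ae_restrict_iff' measurableSet_Icc).2 (Filter.Eventually.of_forall hstep))
  rw [hψint] at hlt
  exact absurd (hlt.trans_le hInnerBound) (lt_irrefl _)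
end
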